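/- Let w_n be non-negative reals such that ∑_{n ≤ x} w_n ∼ C·x·(log x)^{-α} as x → ∞ for some constant C > 0 and α ∈ ℝ. Define μ = ∑_{n ≥ 2} (w_n/n)(δ_{log n} + δ_{−log n}). Then μ is (−α/2)-continuous at infinity: for every ε > 0 there exist R < ∞ and h > 0 such that μ([x, x+h]) ≤ ε(1+x²)^{−α/2} for all |x| ≥ R. -/

import Mathlib

open Finset Real Filter

noncomputable def Wf (w : ℕ → ℝ) (x : ℝ) : ℝ :=
  ∑ n ∈ (Finset.range (⌊x⌋₊ + 1)).filter (fun n : ℕ => 1 ≤ n), w n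

lemma lemB (w : ℕ → ℝ) (hw : ∀ n, 0 ≤ w n) (y h : ℝ) (hh : 0 < h) :
    (∑' n : ℕ, (if 2 ≤ n ∧ y ≤ Real.log n ∧ Real.log n ≤ y + h then w n / n else 0))
      ≤ Real.exp (-y) * (Wf w (Real.exp (y + h)) - Wf w (Real.exp (y - h))) := by
  set A := ⌊Real.exp (y - h)⌋₊ with hA
  set B := ⌊Real.exp (y + h)⌋₊ with hB
  have hAB : A + 1 ≤ B + 1 := by
    have : A ≤ B := Nat.floor_mono (Real.exp_le_exp.2 (by linarith))
    omega
  set s := Finset.Ico (A + 1) (B + 1) with hs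
  set f : ℕ → ℝ := fun n =>
    if 2 ≤ n ∧ y ≤ Real.log n ∧ Real.log n ≤ y + h then w n / n else 0 with hf
  have hmem : ∀ n : ℕ, (2 ≤ n ∧ y ≤ Real.log n ∧ Real.log n ≤ y + h) → n ∈ s := by
    rintro n ⟨h2, hl, hr⟩
    have hn0 : (0:ℝ) < n := by exact_mod_cast (by omega : 0 < n)
    have hen : Real.exp y ≤ n := by
      calc Real.exp y ≤ Real.exp (Real.log n) := Real.exp_le_exp.2 hl
        _ = n := Real.exp_log hn0
    have h1 : (A:ℝ) < n := by
      calc (A:ℝ) ≤ Real.exp (y - h) := Nat.floor_le (Real.exp_pos _).le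
        _ < Real.exp y := Real.exp_lt_exp.2 (by linarith)
        _ ≤ n := hen
    have h2' : (n:ℝ) ≤ Real.exp (y + h) := by
      calc (n:ℝ) = Real.exp (Real.log n) := (Real.exp_log hn0).symm
        _ ≤ Real.exp (y + h) := Real.exp_le_exp.2 hr
    simp only [hs, Finset.mem_Ico]
    constructor
    · exact_mod_cast h1
    · have := Nat.le_floor h2'
      omega
  have hsupp : ∀ n ∉ s, f n = 0 := by
    intro n hn
    rw [hf]
    simp only
    rw [if_neg (fun hP => hn (hmem n hP))]
  rw [tsum_eq_sum hsupp]
  have hle : ∑ n ∈ s, f n ≤ ∑ n ∈ s, Real.exp (-y) * w n := by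
    apply Finset.sum_le_sum
    intro n _
    rw [hf]
    simp only
    split_ifs with hP
    · obtain ⟨h2, hl, _⟩ := hP
      have hn0 : (0:ℝ) < n := by exact_mod_cast (by omega : 0 < n)
      have hen : Real.exp y ≤ n := by
        calc Real.exp y ≤ Real.exp (Real.log n) := Real.exp_le_exp.2 hl
          _ = n := Real.exp_log hn0
      have : Real.exp (-y) * w n = w n / Real.exp y := by
        rw [Real.exp_neg]; ring
      rw [this]
      gcongr <;> first
        | exact hw n
        | exact Real.exp_pos y
        | exact hen
    · exact mul_nonneg (Real.exp_pos _).le (hw n)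
  refine hle.trans (le_of_eq ?_)
  rw [← Finset.mul_sum]
  congr 1
  have hWsum : ∀ t : ℝ, Wf w t = ∑ n ∈ Finset.range (⌊t⌋₊ + 1), (if 1 ≤ n then w n else 0) := by
    intro t
    rw [Wf, Finset.sum_filter]
  have hsplit := Finset.sum_range_add_sum_Ico (fun n => if 1 ≤ n then w n else 0) hAB
  have hsg : ∑ n ∈ s, (if 1 ≤ n then w n else 0) = ∑ n ∈ s, w n := by
    apply Finset.sum_congr rfl
    intro n hn
    rw [if_pos]
    simp only [hs, Finset.mem_Ico] at hn
    omega
  rw [hWsum, hWsum, ← hsplit, ← hsg]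
  ring

lemma ratioLim (α c : ℝ) :
    Tendsto (fun y : ℝ => ((1 + (y + c) ^ 2) / y ^ 2) ^ (α / 2)) atTop (nhds 1) := by
  have h1 : Tendsto (fun y : ℝ => (1 + (y + c) ^ 2) / y ^ 2) atTop (nhds 1) := by
    have hinv : Tendsto (fun y : ℝ => 1 / y ^ 2) atTop (nhds 0) :=
      Tendsto.div_atTop tendsto_const_nhds (tendsto_pow_atTop two_ne_zero)
    have hc : Tendsto (fun y : ℝ => c / y) atTop (nhds 0) :=
      Tendsto.div_atTop tendsto_const_nhds tendsto_id
    have hb : Tendsto (fun y : ℝ => (1 + c / y) ^ 2) atTop (nhds 1) := by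
      have := ((tendsto_const_nhds : Tendsto (fun _ : ℝ => (1:ℝ)) atTop (nhds 1)).add hc).pow 2
      norm_num at this
      exact this
    have h2 : Tendsto (fun y : ℝ => 1 / y ^ 2 + (1 + c / y) ^ 2) atTop (nhds 1) := by
      simpa using hinv.add hb
    apply h2.congr'
    filter_upwards [eventually_gt_atTop 0] with y hy
    field_simp
  have := h1.rpow (tendsto_const_nhds : Tendsto (fun _ : ℝ => α / 2) atTop (nhds (α / 2)))
    (Or.inl one_ne_zero)
  simpa using this

lemma lim1 (w : ℕ → ℝ) (α C : ℝ) (hC : 0 < C)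
    (hasymp : Tendsto (fun x : ℝ => Wf w x / (C * x * Real.log x ^ (-α))) atTop (nhds 1))
    (c : ℝ) :
    Tendsto (fun y => Real.exp (-y) * y ^ α * Wf w (Real.exp (y + c))) atTop
      (nhds (C * Real.exp c)) := by
  have hexp : Tendsto (fun y : ℝ => Real.exp (y + c)) atTop atTop :=
    Real.tendsto_exp_atTop.comp (tendsto_atTop_add_const_right _ c tendsto_id)
  have h1 : Tendsto (fun y => Wf w (Real.exp (y + c)) /
      (C * Real.exp (y + c) * (y + c) ^ (-α))) atTop (nhds 1) := by
    have := hasymp.comp hexp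
    simpa [Function.comp_def, Real.log_exp] using this
  have h2 : Tendsto (fun y : ℝ => (y / (y + c)) ^ α) atTop (nhds 1) := by
    have hd : Tendsto (fun y : ℝ => y / (y + c)) atTop (nhds 1) := by
      have hc0 : Tendsto (fun y : ℝ => c / (y + c)) atTop (nhds 0) :=
        Tendsto.div_atTop tendsto_const_nhds (tendsto_atTop_add_const_right _ c tendsto_id)
      have h0 : Tendsto (fun y : ℝ => 1 - c / (y + c)) atTop (nhds 1) := by
        simpa using tendsto_const_nhds.sub hc0
      apply h0.congr'
      filter_upwards [eventually_gt_atTop (-c)] with y hy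
      have : y + c ≠ 0 := by linarith
      field_simp
      ring
    have := hd.rpow (tendsto_const_nhds : Tendsto (fun _ : ℝ => α) atTop (nhds α))
      (Or.inl one_ne_zero)
    simpa using this
  have h3 := (h1.mul h2).const_mul (C * Real.exp c)
  rw [show (1 : ℝ) * 1 = 1 from mul_one 1, mul_one] at h3
  apply h3.congr'
  filter_upwards [eventually_gt_atTop 0, eventually_gt_atTop (-c)] with y hy hyc
  have hL : 0 < y + c := by linarith
  have hK : (0:ℝ) < (y + c) ^ α := Real.rpow_pos_of_pos hL α
  have hY : (0:ℝ) < y ^ α := Real.rpow_pos_of_pos hy α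
  rw [Real.rpow_neg hL.le, Real.div_rpow hy.le hL.le, Real.exp_neg, Real.exp_add]
  field_simp

/-- If `∑_{n ≤ x} w_n ∼ C x (log x)^{-α}`, then the measure
`μ = ∑_{n≥2} (w_n/n)(δ_{log n} + δ_{-log n})` is `(-α/2)`-continuous at infinity:
for every `ε > 0` there are `R` and `h > 0` with `μ([x,x+h]) ≤ ε(1+x²)^{-α/2}`
for all `|x| ≥ R`. -/
theorem stmt_13 (w : ℕ → ℝ) (hw : ∀ n, 0 ≤ w n) (α : ℝ) (C : ℝ) (hC : 0 < C)
    (hasymp : Tendsto (fun x : ℝ =>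
        (∑ n ∈ (Finset.range (⌊x⌋₊ + 1)).filter (fun n : ℕ => 1 ≤ n), w n)
          / (C * x * Real.log x ^ (-α))) atTop (nhds 1)) :
    ∀ ε : ℝ, 0 < ε → ∃ R h : ℝ, 0 < h ∧ ∀ x : ℝ, R ≤ |x| →
      (∑' n : ℕ,
        ((if 2 ≤ n ∧ x ≤ Real.log n ∧ Real.log n ≤ x + h then w n / n else 0)
          + (if 2 ≤ n ∧ x ≤ -Real.log n ∧ -Real.log n ≤ x + h then w n / n else 0)))
        ≤ ε * (1 + x ^ 2) ^ (-α / 2) := by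
  intro ε hε
  have hasymp' : Tendsto (fun x : ℝ => Wf w x / (C * x * Real.log x ^ (-α))) atTop (nhds 1) :=
    hasymp
  -- choose h
  obtain ⟨h, hh0, hℓ⟩ : ∃ h : ℝ, 0 < h ∧ C * (Real.exp h - Real.exp (-h)) < ε := by
    have hcont : Tendsto (fun t : ℝ => C * (Real.exp t - Real.exp (-t))) (nhds 0) (nhds 0) := by
      have hcon : Continuous fun t : ℝ => C * (Real.exp t - Real.exp (-t)) := by continuity
      simpa using hcon.tendsto 0
    have h2 : ∀ᶠ t in nhdsWithin (0:ℝ) (Set.Ioi 0),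
        C * (Real.exp t - Real.exp (-t)) < ε :=
      (hcont.mono_left nhdsWithin_le_nhds).eventually_lt_const hε
    obtain ⟨t, ht, ht0⟩ := (h2.and eventually_mem_nhdsWithin).exists
    exact ⟨t, ht0, ht⟩
  -- the main eventual estimate
  have hEv : ∀ c : ℝ, ∀ᶠ y in atTop,
      Real.exp (-y) * (Wf w (Real.exp (y + h)) - Wf w (Real.exp (y - h)))
        ≤ ε * (1 + (y + c) ^ 2) ^ (-α / 2) := by
    intro c
    have l1 := lim1 w α C hC hasymp' h
    have l2 : Tendsto (fun y => Real.exp (-y) * y ^ α * Wf w (Real.exp (y - h))) atTop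
        (nhds (C * Real.exp (-h))) := by
      simpa [sub_eq_add_neg] using lim1 w α C hC hasymp' (-h)
    have lkey := (l1.sub l2).mul (ratioLim α c)
    rw [mul_one, ← mul_sub] at lkey
    have hev1 : ∀ᶠ y in atTop,
        (Real.exp (-y) * y ^ α * Wf w (Real.exp (y + h)) -
          Real.exp (-y) * y ^ α * Wf w (Real.exp (y - h))) *
            ((1 + (y + c) ^ 2) / y ^ 2) ^ (α / 2) < ε :=
      lkey.eventually_lt_const hℓ
    filter_upwards [hev1, eventually_gt_atTop 0] with y hlt hy
    set E : ℝ := Real.exp (-y) * (Wf w (Real.exp (y + h)) - Wf w (Real.exp (y - h))) with hE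
    set a : ℝ := 1 + (y + c) ^ 2 with ha
    have ha0 : (0:ℝ) < a := by positivity
    have hyα : (0:ℝ) < y ^ α := Real.rpow_pos_of_pos hy α
    have haα : (0:ℝ) < a ^ (α / 2) := Real.rpow_pos_of_pos ha0 _
    have hy2 : ((y:ℝ) ^ 2) ^ (α / 2) = y ^ α := by
      rw [← Real.rpow_natCast y 2, ← Real.rpow_mul hy.le]
      norm_num
      congr 1
      ring
    have hiden : (Real.exp (-y) * y ^ α * Wf w (Real.exp (y + h)) -
          Real.exp (-y) * y ^ α * Wf w (Real.exp (y - h))) *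
            ((1 + (y + c) ^ 2) / y ^ 2) ^ (α / 2) = E * a ^ (α / 2) := by
      rw [Real.div_rpow ha0.le (by positivity), hy2, hE, ha]
      field_simp
    rw [hiden] at hlt
    have hfin : E ≤ ε / a ^ (α / 2) := (le_div_iff₀ haα).2 hlt.le
    rw [div_eq_mul_inv, ← Real.rpow_neg ha0.le] at hfin
    rwa [neg_div]
  obtain ⟨R₀, hR₀⟩ := eventually_atTop.mp
    ((eventually_ge_atTop (1:ℝ)).and ((hEv 0).and (hEv h)))
  refine ⟨R₀ + h + 1, h, hh0, ?_⟩
  intro x hx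
  rcases le_or_gt 0 x with hx0 | hx0
  · -- positive case
    rw [abs_of_nonneg hx0] at hx
    obtain ⟨hy1, hP0, -⟩ := hR₀ x (by linarith)
    have hzero : ∀ n : ℕ,
        (if 2 ≤ n ∧ x ≤ -Real.log n ∧ -Real.log n ≤ x + h then w n / n else 0) = 0 := by
      intro n
      rw [if_neg]
      rintro ⟨h2, hxn, -⟩
      have hlog : 0 < Real.log n := Real.log_pos (by exact_mod_cast (by omega : 1 < n))
      linarith
    have hrw : (∑' n : ℕ,
        ((if 2 ≤ n ∧ x ≤ Real.log n ∧ Real.log n ≤ x + h then w n / n else 0)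
          + (if 2 ≤ n ∧ x ≤ -Real.log n ∧ -Real.log n ≤ x + h then w n / n else 0)))
        = ∑' n : ℕ, (if 2 ≤ n ∧ x ≤ Real.log n ∧ Real.log n ≤ x + h then w n / n else 0) :=
      tsum_congr fun n => by rw [hzero n, add_zero]
    rw [hrw]
    refine (lemB w hw x h hh0).trans ?_
    simpa using hP0
  · -- negative case
    rw [abs_of_neg hx0] at hx
    set y : ℝ := -x - h with hy
    obtain ⟨hy1, -, hPh⟩ := hR₀ y (by simp only [hy]; linarith)
    have hzero : ∀ n : ℕ,
        (if 2 ≤ n ∧ x ≤ Real.log n ∧ Real.log n ≤ x + h then w n / n else 0) = 0 := by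
      intro n
      rw [if_neg]
      rintro ⟨h2, -, hxn⟩
      have hlog : 0 < Real.log n := Real.log_pos (by exact_mod_cast (by omega : 1 < n))
      have : x + h = -y := by rw [hy]; ring
      linarith
    have hrw : (∑' n : ℕ,
        ((if 2 ≤ n ∧ x ≤ Real.log n ∧ Real.log n ≤ x + h then w n / n else 0)
          + (if 2 ≤ n ∧ x ≤ -Real.log n ∧ -Real.log n ≤ x + h then w n / n else 0)))
        = ∑' n : ℕ, (if 2 ≤ n ∧ y ≤ Real.log n ∧ Real.log n ≤ y + h then w n / n else 0) := by
      refine tsum_congr fun n => ?_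
      rw [hzero n, zero_add]
      refine if_congr ?_ rfl rfl
      constructor
      · rintro ⟨h2, h3, h4⟩
        exact ⟨h2, by simp only [hy]; linarith, by simp only [hy]; linarith⟩
      · rintro ⟨h2, h3, h4⟩
        simp only [hy] at h3 h4
        exact ⟨h2, by linarith, by linarith⟩
    rw [hrw]
    refine (lemB w hw y h hh0).trans ?_
    have hsq : (y + h) ^ 2 = x ^ 2 := by rw [hy]; ring
    rw [hsq] at hPh
    exact hPh
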